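/- Let ℓ, m be integers with 1 ≤ ℓ < m, and let t_{ℓ,m} : ℕ → ℕ be the (ℓ,m)-Thue–Morse word, defined by t_{ℓ,m}(n) = v(t₃(n)) where t₃(n) = (sum of the base-3 digits of n) mod 3 and v(0) = 0, v(1) = ℓ, v(2) = m. If m ≠ 2ℓ, then the additive complexity equals the abelian complexity: ρ⁺_{t_{ℓ,m}}(n) = ρ^{ab}_{t_{ℓ,m}}(n) for all n. If m = 2ℓ, then the additive complexity is the periodic word 1 3 5 5 5 ⋯, i.e., ρ⁺_{t_{ℓ,m}}(0) = 1, ρ⁺_{t_{ℓ,m}}(1) = 3, and ρ⁺_{t_{ℓ,m}}(n) = 5 for all n ≥ 2. -/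

import Mathlib

/-- Sum of the letters of the length-`n` factor of `x` starting at position `i`. -/
def blockSum (x : ℕ → ℕ) (i n : ℕ) : ℕ := ∑ j ∈ Finset.range n, x (i + j)

/-- Additive complexity: the number of distinct letter-sums of length-`n` factors. -/
noncomputable def addComplexity (x : ℕ → ℕ) (n : ℕ) : ℕ :=
  Set.ncard {s : ℕ | ∃ i : ℕ, blockSum x i n = s}

/-- Parikh vector of the length-`n` factor of `x` starting at position `i`. -/
def parikh (x : ℕ → ℕ) (i n : ℕ) : ℕ → ℕ :=
  fun a => ((Finset.range n).filter fun j => x (i + j) = a).card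

/-- Abelian complexity: the number of distinct Parikh vectors of length-`n` factors. -/
noncomputable def abComplexity (x : ℕ → ℕ) (n : ℕ) : ℕ :=
  Set.ncard {P : ℕ → ℕ | ∃ i : ℕ, parikh x i n = P}

/-- `x` is the fixed point of the morphism `f` starting with the letter `a₀`:
`x 0 = a₀` and `x` is the infinite concatenation `f (x 0) f (x 1) f (x 2) ⋯`. -/
def IsFixedPointOf (f : ℕ → List ℕ) (a₀ : ℕ) (x : ℕ → ℕ) : Prop :=
  x 0 = a₀ ∧ ∀ n j, j < (f (x n)).length →
    x ((∑ k ∈ Finset.range n, (f (x k)).length) + j) = (f (x n)).getD j 0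

/-- The ternary Thue–Morse word: the base-3 digit sum, reduced mod 3. -/
def t3 (n : ℕ) : ℕ := (Nat.digits 3 n).sum % 3

/-- The (ℓ,m)-Thue–Morse word: the ternary Thue–Morse word with letters 1, 2 renamed
to ℓ, m respectively. -/
def tlm (l m : ℕ) (n : ℕ) : ℕ :=
  if t3 n = 0 then 0 else if t3 n = 1 then l else m

lemma t3_lt (n : ℕ) : t3 n < 3 := Nat.mod_lt _ (by norm_num)

lemma t3_step (k r : ℕ) (hr : r < 3) : t3 (3*k + r) = (t3 k + r) % 3 := by
  rcases Nat.eq_zero_or_pos (3*k + r) with h | h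
  · have hk : k = 0 := by omega
    have hr0 : r = 0 := by omega
    subst hk; subst hr0; simp [t3]
  · unfold t3
    rw [Nat.digits_def' (by norm_num : 1 < 3) h]
    have h1 : (3*k + r) % 3 = r := by omega
    have h2 : (3*k + r) / 3 = k := by omega
    rw [h1, h2]
    simp only [List.sum_cons]
    omega

lemma t3_pow_add (p : ℕ) : ∀ a b, b < 3^p → t3 (3^p * a + b) = (t3 a + t3 b) % 3 := by
  induction p with
  | zero =>
    intro a b hb
    have hb0 : b = 0 := by omega
    subst hb0
    have h0 : t3 0 = 0 := by simp [t3]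
    have h := t3_lt a
    simp only [pow_zero, one_mul, Nat.add_zero, h0]
    omega
  | succ p ih =>
    intro a b hb
    have hb3 : b % 3 < 3 := Nat.mod_lt _ (by norm_num)
    have key : 3^(p+1) * a + b = 3 * (3^p * a + b / 3) + b % 3 := by
      have h3 : 3^(p+1) * a = 3 * (3^p * a) := by ring
      rw [h3]; omega
    have hbeq : b = 3 * (b / 3) + b % 3 := by omega
    have h2 : t3 b = (t3 (b/3) + b % 3) % 3 := by
      conv_lhs => rw [hbeq]
      exact t3_step _ _ hb3
    have hdiv : b / 3 < 3^p := by
      have : (3:ℕ)^(p+1) = 3 * 3^p := by ring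
      omega
    rw [key, t3_step _ _ hb3, ih a (b/3) hdiv, h2]
    omega

lemma t3_pair_core (A α : ℕ) (h : α + 1 < 27) :
    t3 (27*A+α) = (t3 A + t3 α) % 3 ∧ t3 (27*A+α+1) = (t3 A + t3 (α+1)) % 3 := by
  have e : (3:ℕ)^3 = 27 := by norm_num
  constructor
  · have := t3_pow_add 3 A α (by omega)
    rwa [e] at this
  · have := t3_pow_add 3 A (α+1) (by omega)
    rwa [e, ← Nat.add_assoc] at this

lemma t3_pair (s s' : ℕ) (hs : s < 3) (hs' : s' < 3) : ∃ a, t3 a = s ∧ t3 (a+1) = s' := by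
  interval_cases s <;> interval_cases s'
  · exact ⟨27*2+8, by rw [(t3_pair_core 2 8 (by norm_num)).1]; norm_num [t3],
      by rw [(t3_pair_core 2 8 (by norm_num)).2]; norm_num [t3]⟩
  · exact ⟨27*5+0, by rw [(t3_pair_core 5 0 (by norm_num)).1]; norm_num [t3],
      by rw [(t3_pair_core 5 0 (by norm_num)).2]; norm_num [t3]⟩
  · exact ⟨27*5+5, by rw [(t3_pair_core 5 5 (by norm_num)).1]; norm_num [t3],
      by rw [(t3_pair_core 5 5 (by norm_num)).2]; norm_num [t3]⟩
  · exact ⟨27*1+5, by rw [(t3_pair_core 1 5 (by norm_num)).1]; norm_num [t3],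
      by rw [(t3_pair_core 1 5 (by norm_num)).2]; norm_num [t3]⟩
  · exact ⟨27*5+8, by rw [(t3_pair_core 5 8 (by norm_num)).1]; norm_num [t3],
      by rw [(t3_pair_core 5 8 (by norm_num)).2]; norm_num [t3]⟩
  · exact ⟨27*1+0, by rw [(t3_pair_core 1 0 (by norm_num)).1]; norm_num [t3],
      by rw [(t3_pair_core 1 0 (by norm_num)).2]; norm_num [t3]⟩
  · exact ⟨27*2+0, by rw [(t3_pair_core 2 0 (by norm_num)).1]; norm_num [t3],
      by rw [(t3_pair_core 2 0 (by norm_num)).2]; norm_num [t3]⟩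
  · exact ⟨27*2+5, by rw [(t3_pair_core 2 5 (by norm_num)).1]; norm_num [t3],
      by rw [(t3_pair_core 2 5 (by norm_num)).2]; norm_num [t3]⟩
  · exact ⟨27*1+8, by rw [(t3_pair_core 1 8 (by norm_num)).1]; norm_num [t3],
      by rw [(t3_pair_core 1 8 (by norm_num)).2]; norm_num [t3]⟩

lemma t3_dist (d s s' : ℕ) (hd : 1 ≤ d) (hs : s < 3) (hs' : s' < 3) :
    ∃ k, t3 k = s ∧ t3 (k + d) = s' := by
  have hdp : d < 3^d := Nat.lt_pow_self (by norm_num)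
  set b := 3^d - d with hb
  have hb1 : b < 3^d := by omega
  have hs1 : t3 b < 3 := t3_lt b
  obtain ⟨a, ha1, ha2⟩ := t3_pair ((s + 3 - t3 b) % 3) s' (by omega) hs'
  refine ⟨3^d * a + b, ?_, ?_⟩
  · rw [t3_pow_add d a b hb1, ha1]; omega
  · have he : 3^d * a + b + d = 3^d * (a+1) + 0 := by
      have : 3^d * (a+1) = 3^d * a + 3^d := by ring
      omega
    have h0 : t3 0 = 0 := by simp [t3]
    rw [he, t3_pow_add d (a+1) 0 (by positivity), ha2, h0]
    omega

lemma blockSum_split (x : ℕ → ℕ) (i n : ℕ) :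
    blockSum x 0 i + blockSum x i n = blockSum x 0 (i+n) := by
  simp [blockSum, Finset.sum_range_add]

def Tsum (N : ℕ) : ℕ := blockSum t3 0 N

lemma Tsum_succ (N : ℕ) : Tsum (N+1) = Tsum N + t3 N := by
  simp [Tsum, blockSum, Finset.sum_range_succ]

lemma Tsum_mul3 : ∀ k, Tsum (3*k) = 3*k := by
  intro k; induction k with
  | zero => simp [Tsum, blockSum]
  | succ k ih =>
    have h0 : t3 (3*k) = t3 k % 3 := by simpa using t3_step k 0 (by norm_num)
    have h1 := t3_step k 1 (by norm_num)
    have h2 := t3_step k 2 (by norm_num)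
    have hs := t3_lt k
    have e : 3*(k+1) = 3*k+1+1+1 := by ring
    have e2 : 3*k+1+1 = 3*k+2 := by ring
    rw [e, Tsum_succ, Tsum_succ, Tsum_succ, e2, ih]
    omega

lemma Tsum_1 (k : ℕ) : Tsum (3*k+1) = 3*k + t3 k := by
  have h0 : t3 (3*k) = t3 k % 3 := by simpa using t3_step k 0 (by norm_num)
  have hs := t3_lt k
  rw [Tsum_succ, Tsum_mul3]
  omega

lemma Tsum_2 (k : ℕ) : Tsum (3*k+2) = 3*k + t3 k + (t3 k + 1) % 3 := by
  have h1 := t3_step k 1 (by norm_num)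
  have e2 : 3*k+2 = 3*k+1+1 := by ring
  rw [e2, Tsum_succ, Tsum_1, h1]

lemma Tsum_bounds (N : ℕ) : N ≤ Tsum N + 1 ∧ Tsum N ≤ N + 1 := by
  obtain ⟨k, r, hr, rfl⟩ : ∃ k r, r < 3 ∧ N = 3*k + r := ⟨N/3, N%3, by omega, by omega⟩
  have hs := t3_lt k
  interval_cases r
  · rw [Nat.add_zero, Tsum_mul3]; omega
  · rw [Tsum_1]; omega
  · rw [Tsum_2]; omega

lemma blockSum_t3_bounds (i n : ℕ) :
    n ≤ blockSum t3 i n + 2 ∧ blockSum t3 i n ≤ n + 2 := by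
  have h := blockSum_split t3 i n
  have b1 := Tsum_bounds i
  have b2 := Tsum_bounds (i+n)
  simp only [Tsum] at b1 b2
  omega

lemma leaf (k d r r' n : ℕ) (hn : n + r = 3*d + r') :
    blockSum t3 (3*k+r) n + Tsum (3*k+r) = Tsum (3*(k+d)+r') := by
  have h := blockSum_split t3 (3*k+r) n
  have e : 3*k+r+n = 3*(k+d)+r' := by omega
  rw [e] at h
  simp only [Tsum]
  omega

lemma witness_core (n q r r' s s' d c c' : ℕ) (hd : 1 ≤ d)
    (hT1 : ∀ k, t3 k = s → Tsum (3*k+r) = 3*k + s + c)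
    (hT2 : ∀ k, t3 k = s' → Tsum (3*k+r') = 3*k + s' + c')
    (hs : s < 3) (hs' : s' < 3)
    (hn : n + r = 3*d + r') (hq : q + r' + s + c = n + r + s' + c') :
    ∃ i, blockSum t3 i n = q := by
  obtain ⟨k, hk, hk'⟩ := t3_dist d s s' hd hs hs'
  have h := leaf k d r r' n hn
  rw [hT1 k hk, hT2 (k+d) hk'] at h
  exact ⟨3*k+r, by omega⟩

lemma TsumF1 (s : ℕ) : ∀ k, t3 k = s → Tsum (3*k+1) = 3*k + s + 0 := by
  intro k hk; rw [Tsum_1, hk, Nat.add_zero]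

lemma TsumF2 (s c : ℕ) (hc : (s+1) % 3 = c) :
    ∀ k, t3 k = s → Tsum (3*k+2) = 3*k + s + c := by
  intro k hk; rw [Tsum_2, hk, hc]

lemma blockSum_witness (n q : ℕ) (hn : 2 ≤ n) (h1 : n ≤ q + 2) (h2 : q ≤ n + 2) :
    ∃ i, blockSum t3 i n = q := by
  rcases (show n % 3 = 0 ∨ n % 3 = 1 ∨ n % 3 = 2 by omega) with h3 | h3 | h3
  · -- r = 1, r' = 1, d = n/3
    rcases (show q + 2 = n ∨ q + 1 = n ∨ q = n ∨ q = n+1 ∨ q = n+2 by omega) with hq|hq|hq|hq|hq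
    · exact witness_core n q 1 1 2 0 (n/3) 0 0 (by omega) (TsumF1 2) (TsumF1 0)
        (by norm_num) (by norm_num) (by omega) (by omega)
    · exact witness_core n q 1 1 2 1 (n/3) 0 0 (by omega) (TsumF1 2) (TsumF1 1)
        (by norm_num) (by norm_num) (by omega) (by omega)
    · exact witness_core n q 1 1 1 1 (n/3) 0 0 (by omega) (TsumF1 1) (TsumF1 1)
        (by norm_num) (by norm_num) (by omega) (by omega)
    · exact witness_core n q 1 1 0 1 (n/3) 0 0 (by omega) (TsumF1 0) (TsumF1 1)
        (by norm_num) (by norm_num) (by omega) (by omega)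
    · exact witness_core n q 1 1 0 2 (n/3) 0 0 (by omega) (TsumF1 0) (TsumF1 2)
        (by norm_num) (by norm_num) (by omega) (by omega)
  · -- r = 1, r' = 2, d = (n-1)/3
    rcases (show q + 2 = n ∨ q + 1 = n ∨ q = n ∨ q = n+1 ∨ q = n+2 by omega) with hq|hq|hq|hq|hq
    · exact witness_core n q 1 2 2 0 ((n-1)/3) 0 1 (by omega) (TsumF1 2) (TsumF2 0 1 (by norm_num))
        (by norm_num) (by norm_num) (by omega) (by omega)
    · exact witness_core n q 1 2 2 2 ((n-1)/3) 0 0 (by omega) (TsumF1 2) (TsumF2 2 0 (by norm_num))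
        (by norm_num) (by norm_num) (by omega) (by omega)
    · exact witness_core n q 1 2 1 2 ((n-1)/3) 0 0 (by omega) (TsumF1 1) (TsumF2 2 0 (by norm_num))
        (by norm_num) (by norm_num) (by omega) (by omega)
    · exact witness_core n q 1 2 1 1 ((n-1)/3) 0 2 (by omega) (TsumF1 1) (TsumF2 1 2 (by norm_num))
        (by norm_num) (by norm_num) (by omega) (by omega)
    · exact witness_core n q 1 2 0 1 ((n-1)/3) 0 2 (by omega) (TsumF1 0) (TsumF2 1 2 (by norm_num))
        (by norm_num) (by norm_num) (by omega) (by omega)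
  · -- r = 2, r' = 1, d = (n+1)/3
    rcases (show q + 2 = n ∨ q + 1 = n ∨ q = n ∨ q = n+1 ∨ q = n+2 by omega) with hq|hq|hq|hq|hq
    · exact witness_core n q 2 1 1 0 ((n+1)/3) 2 0 (by omega) (TsumF2 1 2 (by norm_num)) (TsumF1 0)
        (by norm_num) (by norm_num) (by omega) (by omega)
    · exact witness_core n q 2 1 1 1 ((n+1)/3) 2 0 (by omega) (TsumF2 1 2 (by norm_num)) (TsumF1 1)
        (by norm_num) (by norm_num) (by omega) (by omega)
    · exact witness_core n q 2 1 2 1 ((n+1)/3) 0 0 (by omega) (TsumF2 2 0 (by norm_num)) (TsumF1 1)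
        (by norm_num) (by norm_num) (by omega) (by omega)
    · exact witness_core n q 2 1 2 2 ((n+1)/3) 0 0 (by omega) (TsumF2 2 0 (by norm_num)) (TsumF1 2)
        (by norm_num) (by norm_num) (by omega) (by omega)
    · exact witness_core n q 2 1 0 2 ((n+1)/3) 1 0 (by omega) (TsumF2 0 1 (by norm_num)) (TsumF1 2)
        (by norm_num) (by norm_num) (by omega) (by omega)

def cnt (c i n : ℕ) : ℕ := ((Finset.range n).filter fun j => t3 (i+j) = c).card

lemma cnt_eq (c i n : ℕ) : cnt c i n = blockSum (fun j => if t3 j = c then 1 else 0) i n := by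
  unfold cnt blockSum
  rw [Finset.card_filter]

lemma cnt_split (c i n : ℕ) : cnt c 0 i + cnt c i n = cnt c 0 (i+n) := by
  simp only [cnt_eq]; exact blockSum_split _ i n

lemma cnt_succ (c N : ℕ) : cnt c 0 (N+1) = cnt c 0 N + (if t3 N = c then 1 else 0) := by
  simp only [cnt_eq, blockSum]
  rw [Finset.sum_range_succ]
  simp

lemma cnt_mul3 (c : ℕ) (hc : c < 3) : ∀ k, cnt c 0 (3*k) = k := by
  intro k; induction k with
  | zero => simp [cnt]
  | succ k ih =>
    have h0 : t3 (3*k) = t3 k % 3 := by simpa using t3_step k 0 (by norm_num)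
    have h1 := t3_step k 1 (by norm_num)
    have h2 := t3_step k 2 (by norm_num)
    have hs := t3_lt k
    have e : 3*(k+1) = 3*k+1+1+1 := by ring
    have e2 : 3*k+1+1 = 3*k+2 := by ring
    rw [e, cnt_succ, cnt_succ, cnt_succ, e2, ih, h0, h1, h2]
    rcases (show t3 k = 0 ∨ t3 k = 1 ∨ t3 k = 2 by omega) with h|h|h <;>
      rcases (show c = 0 ∨ c = 1 ∨ c = 2 by omega) with h'|h'|h' <;>
        simp only [h, h'] <;> norm_num

lemma cnt_bounds (c : ℕ) (hc : c < 3) (N : ℕ) :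
    N ≤ 3 * cnt c 0 N + 2 ∧ 3 * cnt c 0 N ≤ N + 2 := by
  obtain ⟨k, r, hr, rfl⟩ : ∃ k r, r < 3 ∧ N = 3*k + r := ⟨N/3, N%3, by omega, by omega⟩
  have hm := cnt_mul3 c hc k
  have h0 : t3 (3*k) = t3 k % 3 := by simpa using t3_step k 0 (by norm_num)
  have h1 := t3_step k 1 (by norm_num)
  have hs := t3_lt k
  interval_cases r
  · rw [Nat.add_zero, hm]; omega
  · rw [cnt_succ, hm]; split_ifs <;> omega
  · have e2 : 3*k+2 = 3*k+1+1 := by ring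
    rw [e2, cnt_succ, cnt_succ, hm]
    split_ifs <;> omega

lemma cnt_balance (c : ℕ) (hc : c < 3) (i i' n : ℕ) : cnt c i n ≤ cnt c i' n + 2 := by
  have h1 := cnt_split c i n
  have h2 := cnt_split c i' n
  have b1 := cnt_bounds c hc i
  have b2 := cnt_bounds c hc (i+n)
  have b3 := cnt_bounds c hc i'
  have b4 := cnt_bounds c hc (i'+n)
  omega

lemma cnt_total (i n : ℕ) : cnt 0 i n + cnt 1 i n + cnt 2 i n = n := by
  simp only [cnt_eq, blockSum]
  rw [← Finset.sum_add_distrib, ← Finset.sum_add_distrib]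
  rw [Finset.sum_congr rfl (g := fun _ => 1) fun j _ => ?_]
  · simp
  · have h := t3_lt (i+j)
    rcases (show t3 (i+j) = 0 ∨ t3 (i+j) = 1 ∨ t3 (i+j) = 2 by omega) with h1|h1|h1 <;>
      simp [h1]

lemma parikh_tlm_0 (l m : ℕ) (hl : 1 ≤ l) (hlm : l < m) (i n : ℕ) :
    parikh (tlm l m) i n 0 = cnt 0 i n := by
  unfold parikh cnt
  congr 1
  apply Finset.filter_congr
  intro j _
  unfold tlm
  have h := t3_lt (i+j)
  rcases (show t3 (i+j) = 0 ∨ t3 (i+j) = 1 ∨ t3 (i+j) = 2 by omega) with h1|h1|h1 <;>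
    simp [h1] <;> omega

lemma parikh_tlm_l (l m : ℕ) (hl : 1 ≤ l) (hlm : l < m) (i n : ℕ) :
    parikh (tlm l m) i n l = cnt 1 i n := by
  unfold parikh cnt
  congr 1
  apply Finset.filter_congr
  intro j _
  unfold tlm
  have h := t3_lt (i+j)
  rcases (show t3 (i+j) = 0 ∨ t3 (i+j) = 1 ∨ t3 (i+j) = 2 by omega) with h1|h1|h1 <;>
    simp [h1] <;> omega

lemma parikh_tlm_m (l m : ℕ) (hl : 1 ≤ l) (hlm : l < m) (i n : ℕ) :
    parikh (tlm l m) i n m = cnt 2 i n := by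
  unfold parikh cnt
  congr 1
  apply Finset.filter_congr
  intro j _
  unfold tlm
  have h := t3_lt (i+j)
  rcases (show t3 (i+j) = 0 ∨ t3 (i+j) = 1 ∨ t3 (i+j) = 2 by omega) with h1|h1|h1 <;>
    simp [h1] <;> omega

lemma parikh_other (l m : ℕ) (hl : 1 ≤ l) (hlm : l < m) (i n a : ℕ)
    (ha0 : a ≠ 0) (hal : a ≠ l) (ham : a ≠ m) : parikh (tlm l m) i n a = 0 := by
  unfold parikh
  rw [Finset.filter_false_of_mem, Finset.card_empty]
  intro j _
  unfold tlm
  have h := t3_lt (i+j)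
  rcases (show t3 (i+j) = 0 ∨ t3 (i+j) = 1 ∨ t3 (i+j) = 2 by omega) with h1|h1|h1 <;>
    simp [h1] <;> omega

lemma blockSum_tlm (l m : ℕ) (hl : 1 ≤ l) (hlm : l < m) (i n : ℕ) :
    blockSum (tlm l m) i n
      = l * parikh (tlm l m) i n l + m * parikh (tlm l m) i n m := by
  unfold blockSum parikh
  rw [Finset.card_filter, Finset.card_filter, Finset.mul_sum, Finset.mul_sum,
    ← Finset.sum_add_distrib]
  apply Finset.sum_congr rfl
  intro j _
  unfold tlm
  have h := t3_lt (i+j)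
  rcases (show t3 (i+j) = 0 ∨ t3 (i+j) = 1 ∨ t3 (i+j) = 2 by omega) with h1|h1|h1 <;>
    rw [h1] <;> split_ifs <;> omega

section
variable {l m : ℕ}

lemma sum_inj_aux (l m a b a' k : ℕ) (hl : 1 ≤ l) (hlm : l < m) (hm2 : m ≠ 2*l)
    (heq : l*a + m*b = l*a' + m*(b+k)) (ha2 : a ≤ a' + 2) (ha2' : a' ≤ a + 2) (hk : k ≤ 2) :
    a = a' ∧ k = 0 := by
  have e0 : m*(b+k) = m*b + m*k := by ring
  have h2 : l*a = l*a' + m*k := by linarith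
  rcases le_or_gt a a' with h | h
  · obtain ⟨j, rfl⟩ : ∃ j, a' = a + j := ⟨a' - a, by omega⟩
    have e : l*(a+j) = l*a + l*j := by ring
    have h3 : l*j + m*k = 0 := by linarith
    have hj : j = 0 := by
      rcases Nat.mul_eq_zero.mp (by omega : l*j = 0) with h'|h' <;> omega
    have hk0 : k = 0 := by
      rcases Nat.mul_eq_zero.mp (by omega : m*k = 0) with h'|h' <;> omega
    omega
  · obtain ⟨j, rfl⟩ : ∃ j, a = a' + j := ⟨a - a', by omega⟩
    have hj : 1 ≤ j ∧ j ≤ 2 := by omega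
    have e : l*(a'+j) = l*a' + l*j := by ring
    have h3 : l*j = m*k := by linarith
    exfalso
    obtain ⟨hj1, hj2⟩ := hj
    interval_cases j <;> interval_cases k <;> omega

lemma sum_inj (l m a b a' b' : ℕ) (hl : 1 ≤ l) (hlm : l < m) (hm2 : m ≠ 2*l)
    (heq : l*a + m*b = l*a' + m*b')
    (ha : a ≤ a' + 2) (ha' : a' ≤ a + 2) (hb : b ≤ b' + 2) (hb' : b' ≤ b + 2) :
    a = a' ∧ b = b' := by
  rcases le_or_gt b b' with h | h
  · obtain ⟨k, rfl⟩ : ∃ k, b' = b + k := ⟨b' - b, by omega⟩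
    have := sum_inj_aux l m a b a' k hl hlm hm2 heq ha ha' (by omega)
    omega
  · obtain ⟨k, rfl⟩ : ∃ k, b = b' + k := ⟨b - b', by omega⟩
    have := sum_inj_aux l m a' b' a k hl hlm hm2 heq.symm ha' ha (by omega)
    omega
end

lemma addSet_eq_image (l m : ℕ) (hl : 1 ≤ l) (hlm : l < m) (n : ℕ) :
    {s : ℕ | ∃ i, blockSum (tlm l m) i n = s}
      = (fun P : ℕ → ℕ => l * P l + m * P m) '' {P | ∃ i, parikh (tlm l m) i n = P} := by
  ext s
  simp only [Set.mem_setOf_eq, Set.mem_image]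
  constructor
  · rintro ⟨i, rfl⟩
    exact ⟨parikh (tlm l m) i n, ⟨i, rfl⟩, (blockSum_tlm l m hl hlm i n).symm⟩
  · rintro ⟨P, ⟨i, rfl⟩, rfl⟩
    exact ⟨i, blockSum_tlm l m hl hlm i n⟩

lemma parikh_injOn (l m : ℕ) (hl : 1 ≤ l) (hlm : l < m) (hm2 : m ≠ 2*l) (n : ℕ) :
    Set.InjOn (fun P : ℕ → ℕ => l * P l + m * P m)
      {P | ∃ i, parikh (tlm l m) i n = P} := by
  rintro P ⟨i, rfl⟩ Q ⟨i', rfl⟩ hPQ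
  simp only at hPQ
  rw [parikh_tlm_l l m hl hlm i n, parikh_tlm_m l m hl hlm i n,
      parikh_tlm_l l m hl hlm i' n, parikh_tlm_m l m hl hlm i' n] at hPQ
  have key := sum_inj l m (cnt 1 i n) (cnt 2 i n) (cnt 1 i' n) (cnt 2 i' n)
      hl hlm hm2 hPQ (cnt_balance 1 (by norm_num) i i' n) (cnt_balance 1 (by norm_num) i' i n)
      (cnt_balance 2 (by norm_num) i i' n) (cnt_balance 2 (by norm_num) i' i n)
  have ht1 := cnt_total i n
  have ht2 := cnt_total i' n
  funext a
  by_cases h0 : a = 0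
  · subst h0
    rw [parikh_tlm_0 l m hl hlm i n, parikh_tlm_0 l m hl hlm i' n]
    omega
  · by_cases hla : a = l
    · rw [hla]
      rw [parikh_tlm_l l m hl hlm i n, parikh_tlm_l l m hl hlm i' n]
      exact key.1
    · by_cases hma : a = m
      · rw [hma]
        rw [parikh_tlm_m l m hl hlm i n, parikh_tlm_m l m hl hlm i' n]
        exact key.2
      · rw [parikh_other l m hl hlm i n a h0 hla hma,
            parikh_other l m hl hlm i' n a h0 hla hma]

lemma partA (l m : ℕ) (hl : 1 ≤ l) (hlm : l < m) (hm2 : m ≠ 2*l) (n : ℕ) :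
    addComplexity (tlm l m) n = abComplexity (tlm l m) n := by
  unfold addComplexity abComplexity
  rw [addSet_eq_image l m hl hlm n,
    Set.ncard_image_of_injOn (parikh_injOn l m hl hlm hm2 n)]

-- Part B
lemma tlm_two (l : ℕ) (hl : 1 ≤ l) : tlm l (2*l) = fun n => l * t3 n := by
  funext n
  unfold tlm
  have h := t3_lt n
  rcases (show t3 n = 0 ∨ t3 n = 1 ∨ t3 n = 2 by omega) with h1|h1|h1 <;>
    rw [h1] <;> simp <;> ring

lemma blockSum_smul (l : ℕ) (x : ℕ → ℕ) (i n : ℕ) :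
    blockSum (fun j => l * x j) i n = l * blockSum x i n := by
  unfold blockSum; rw [Finset.mul_sum]

lemma addC_scale (l : ℕ) (hl : l ≠ 0) (x : ℕ → ℕ) (n : ℕ) :
    addComplexity (fun j => l * x j) n = addComplexity x n := by
  unfold addComplexity
  have h : {s : ℕ | ∃ i, blockSum (fun j => l * x j) i n = s}
      = (fun s => l * s) '' {s | ∃ i, blockSum x i n = s} := by
    ext s
    simp only [Set.mem_setOf_eq, Set.mem_image, blockSum_smul]
    constructor
    · rintro ⟨i, rfl⟩; exact ⟨blockSum x i n, ⟨i, rfl⟩, rfl⟩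
    · rintro ⟨t, ⟨i, rfl⟩, rfl⟩; exact ⟨i, rfl⟩
  rw [h, Set.ncard_image_of_injective _ (mul_right_injective₀ hl)]

lemma addC_t3_zero : addComplexity t3 0 = 1 := by
  unfold addComplexity
  have h : {s : ℕ | ∃ i, blockSum t3 i 0 = s} = {0} := by
    ext s; simp [blockSum, eq_comm]
  rw [h, Set.ncard_singleton]

lemma addC_t3_one : addComplexity t3 1 = 3 := by
  unfold addComplexity
  have h : {s : ℕ | ∃ i, blockSum t3 i 1 = s} = ↑({0,1,2} : Finset ℕ) := by
    ext s
    simp only [Set.mem_setOf_eq, blockSum, Finset.sum_range_one, Nat.add_zero,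
      Finset.coe_insert, Set.mem_insert_iff, Finset.coe_singleton, Set.mem_singleton_iff]
    constructor
    · rintro ⟨i, rfl⟩
      have := t3_lt i
      omega
    · rintro (rfl|rfl|rfl)
      · exact ⟨0, by norm_num [t3]⟩
      · exact ⟨1, by norm_num [t3]⟩
      · exact ⟨2, by norm_num [t3]⟩
  rw [h, Set.ncard_coe_finset]
  rfl

lemma addC_t3_big (n : ℕ) (hn : 2 ≤ n) : addComplexity t3 n = 5 := by
  unfold addComplexity
  have h : {s : ℕ | ∃ i, blockSum t3 i n = s} = ↑(Finset.Icc (n-2) (n+2)) := by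
    ext s
    simp only [Set.mem_setOf_eq, Finset.coe_Icc, Set.mem_Icc]
    constructor
    · rintro ⟨i, rfl⟩
      have := blockSum_t3_bounds i n
      omega
    · rintro ⟨h1, h2⟩
      exact blockSum_witness n s hn (by omega) h2
  rw [h, Set.ncard_coe_finset, Nat.card_Icc]
  omega


/-- If m ≠ 2ℓ then the additive complexity of the (ℓ,m)-Thue–Morse word equals its
abelian complexity; if m = 2ℓ then its additive complexity is 1 3 5 5 5 ⋯. -/
theorem lm_thue_morse_additive_complexity (l m : ℕ) (hl : 1 ≤ l) (hlm : l < m) :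
    (m ≠ 2 * l → ∀ n, addComplexity (tlm l m) n = abComplexity (tlm l m) n) ∧
    (m = 2 * l →
      addComplexity (tlm l m) 0 = 1 ∧ addComplexity (tlm l m) 1 = 3 ∧
      ∀ n, 2 ≤ n → addComplexity (tlm l m) n = 5) := by
  constructor
  · intro hm2 n
    exact partA l m hl hlm hm2 n
  · intro hm2
    subst hm2
    rw [tlm_two l hl]
    refine ⟨?_, ?_, ?_⟩
    · rw [addC_scale l (by omega) t3 0, addC_t3_zero]
    · rw [addC_scale l (by omega) t3 1, addC_t3_one]
    · intro n hn
      rw [addC_scale l (by omega) t3 n, addC_t3_big n hn]
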